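/- Let α, c₁, c₂ ∈ ℂ satisfy α² = −2 and exp(αc₁ + c₂) = −1. Define f, g : ℂ² → ℂ by f(z₁, z₂) := (1/(12√2))·((3 − √3)·exp(αz₁ + z₂ + 1) − (3 + √3)·exp(−(αz₁ + z₂ + 1))) and g(z₁, z₂) := (1/(12√2))·((3 − √3)·exp(−(αz₁ + z₂ + 1)) − (3 + √3)·exp(αz₁ + z₂ + 1)). Then for all z = (z₁, z₂) ∈ ℂ²: (∂²f/∂z₁²)(z)² + 4·(∂²f/∂z₁²)(z)·(g(z₁ + c₁, z₂ + c₂) − g(z)) + (g(z₁ + c₁, z₂ + c₂) − g(z))² = 1 and (∂²g/∂z₁²)(z)² + 4·(∂²g/∂z₁²)(z)·(f(z₁ + c₁, z₂ + c₂) − f(z)) + (f(z₁ + c₁, z₂ + c₂) − f(z))² = 1. -/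

import Mathlib

private lemma myHasDeriv (P Q a b z : ℂ) :
    HasDerivAt (fun t => P * Complex.exp (a*t+b) + Q * Complex.exp (-(a*t+b)))
      ((P*a) * Complex.exp (a*z+b) + (-(Q*a)) * Complex.exp (-(a*z+b))) z := by
  have h1 : HasDerivAt (fun t : ℂ => a*t+b) a z := by
    simpa using ((hasDerivAt_id z).const_mul a).add_const b
  have h2 := (Complex.hasDerivAt_exp (a*z+b)).comp z h1
  have h3 := (Complex.hasDerivAt_exp (-(a*z+b))).comp z h1.neg
  have := (h2.const_mul P).add (h3.const_mul Q)
  rw [show ((P*a) * Complex.exp (a*z+b) + (-(Q*a)) * Complex.exp (-(a*z+b))) = P * (Complex.exp (a * z + b) * a) + Q * (Complex.exp (-(a * z + b)) * -a) by ring]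
  exact this

private lemma myDeriv2 (P Q a b z : ℂ) :
    iteratedDeriv 2 (fun t => P * Complex.exp (a*t+b) + Q * Complex.exp (-(a*t+b))) z
      = a^2 * (P * Complex.exp (a*z+b) + Q * Complex.exp (-(a*z+b))) := by
  have hd : deriv (fun t => P * Complex.exp (a*t+b) + Q * Complex.exp (-(a*t+b)))
      = fun w => (P*a) * Complex.exp (a*w+b) + (-(Q*a)) * Complex.exp (-(a*w+b)) := by
    funext w; exact (myHasDeriv P Q a b w).deriv
  rw [show (2:ℕ) = 1+1 from rfl, iteratedDeriv_succ, iteratedDeriv_one, hd,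
    (myHasDeriv (P*a) (-(Q*a)) a b z).deriv]
  ring

private lemma key (s3 E E' K : ℂ) (hE : E * E' = 1) (h3 : s3^2 = 3) (hK : 288 * K^2 = 1) :
    (-2 * (K * ((3 - s3) * E - (3 + s3) * E')))^2
      + 4 * (-2 * (K * ((3 - s3) * E - (3 + s3) * E')))
          * (-2 * (K * ((3 - s3) * E' - (3 + s3) * E)))
      + (-2 * (K * ((3 - s3) * E' - (3 + s3) * E)))^2 = 1 := by
  linear_combination (4*K^2*(6*E^2+12*E*E'+6*E'^2)) * h3 + (288*K^2) * hE + hK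

theorem stmt_18 (α c₁ c₂ : ℂ)
    (hα : α ^ 2 = -2) (hc : Complex.exp (α * c₁ + c₂) = -1)
    (f g : ℂ → ℂ → ℂ)
    (hf : ∀ z₁ z₂, f z₁ z₂ = (1 / (12 * (Real.sqrt 2 : ℂ)))
      * ((3 - (Real.sqrt 3 : ℂ)) * Complex.exp (α * z₁ + z₂ + 1)
        - (3 + (Real.sqrt 3 : ℂ)) * Complex.exp (-(α * z₁ + z₂ + 1))))
    (hg : ∀ z₁ z₂, g z₁ z₂ = (1 / (12 * (Real.sqrt 2 : ℂ)))
      * ((3 - (Real.sqrt 3 : ℂ)) * Complex.exp (-(α * z₁ + z₂ + 1))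
        - (3 + (Real.sqrt 3 : ℂ)) * Complex.exp (α * z₁ + z₂ + 1))) :
    ∀ z₁ z₂ : ℂ,
      (iteratedDeriv 2 (fun t => f t z₂) z₁) ^ 2
          + 4 * (iteratedDeriv 2 (fun t => f t z₂) z₁)
            * (g (z₁ + c₁) (z₂ + c₂) - g z₁ z₂)
          + (g (z₁ + c₁) (z₂ + c₂) - g z₁ z₂) ^ 2 = 1 ∧
      (iteratedDeriv 2 (fun t => g t z₂) z₁) ^ 2
          + 4 * (iteratedDeriv 2 (fun t => g t z₂) z₁)
            * (f (z₁ + c₁) (z₂ + c₂) - f z₁ z₂)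
          + (f (z₁ + c₁) (z₂ + c₂) - f z₁ z₂) ^ 2 = 1 := by
  intro z₁ z₂
  set s2 : ℂ := (Real.sqrt 2 : ℂ) with hs2def
  set s3 : ℂ := (Real.sqrt 3 : ℂ) with hs3def
  set K : ℂ := 1 / (12 * s2) with hKdef
  have h2 : s2^2 = 2 := by
    rw [hs2def]
    norm_cast
    rw [Real.sq_sqrt] <;> norm_num
  have h3 : s3^2 = 3 := by
    rw [hs3def]
    norm_cast
    rw [Real.sq_sqrt] <;> norm_num
  have hs2 : s2 ≠ 0 := by
    intro h
    rw [h] at h2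
    norm_num at h2
  have hK : 288 * K^2 = 1 := by
    rw [hKdef]
    field_simp
    linear_combination (-144) * h2
  set E : ℂ := Complex.exp (α * z₁ + z₂ + 1) with hEdef
  set E' : ℂ := Complex.exp (-(α * z₁ + z₂ + 1)) with hE'def
  have hE : E * E' = 1 := by
    rw [hEdef, hE'def, ← Complex.exp_add,
      show (α*z₁+z₂+1) + -(α*z₁+z₂+1) = 0 by ring, Complex.exp_zero]
  -- second derivatives
  have hffun : (fun t => f t z₂)
      = fun t => (K*(3-s3)) * Complex.exp (α*t+(z₂+1))
        + (-(K*(3+s3))) * Complex.exp (-(α*t+(z₂+1))) := by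
    funext t
    rw [hf, show α*t+z₂+1 = α*t+(z₂+1) by ring]
    ring
  have hgfun : (fun t => g t z₂)
      = fun t => (-(K*(3+s3))) * Complex.exp (α*t+(z₂+1))
        + (K*(3-s3)) * Complex.exp (-(α*t+(z₂+1))) := by
    funext t
    rw [hg, show α*t+z₂+1 = α*t+(z₂+1) by ring]
    ring
  have hF2 : iteratedDeriv 2 (fun t => f t z₂) z₁ = -2 * (K * ((3-s3)*E - (3+s3)*E')) := by
    rw [hffun, myDeriv2, hα, hEdef, hE'def, show α*z₁+(z₂+1) = α*z₁+z₂+1 by ring]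
    ring
  have hG2 : iteratedDeriv 2 (fun t => g t z₂) z₁ = -2 * (K * ((3-s3)*E' - (3+s3)*E)) := by
    rw [hgfun, myDeriv2, hα, hEdef, hE'def, show α*z₁+(z₂+1) = α*z₁+z₂+1 by ring]
    ring
  -- shifts
  have hsh : Complex.exp (α*(z₁+c₁)+(z₂+c₂)+1) = -E := by
    rw [show α*(z₁+c₁)+(z₂+c₂)+1 = (α*z₁+z₂+1)+(α*c₁+c₂) by ring, Complex.exp_add, hc,
      hEdef]
    ring
  have hsh' : Complex.exp (-(α*(z₁+c₁)+(z₂+c₂)+1)) = -E' := by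
    have hmc : Complex.exp (-(α*c₁+c₂)) = -1 := by
      rw [Complex.exp_neg, hc]; norm_num
    rw [show -(α*(z₁+c₁)+(z₂+c₂)+1) = (-(α*z₁+z₂+1))+(-(α*c₁+c₂)) by ring, Complex.exp_add,
      hmc, ← hE'def]
    ring
  have hGs : g (z₁+c₁) (z₂+c₂) - g z₁ z₂ = -2 * (K * ((3-s3)*E' - (3+s3)*E)) := by
    rw [hg, hg, hsh, hsh', hEdef, hE'def]
    ring
  have hFs : f (z₁+c₁) (z₂+c₂) - f z₁ z₂ = -2 * (K * ((3-s3)*E - (3+s3)*E')) := by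
    rw [hf, hf, hsh, hsh', hEdef, hE'def]
    ring
  constructor
  · rw [hF2, hGs]
    exact key s3 E E' K hE h3 hK
  · rw [hG2, hFs]
    exact key s3 E' E K (by rw [mul_comm]; exact hE) h3 hK
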